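/- arXiv:2205.13706 — 3 statements merged into one kernel-verified Lean document; each statement's English description precedes it below -/
import Mathlib

section
/- Let ϱ : ℝ² → ℝ be nonnegative, integrable with ∫ ϱ = κ > 0, supported in B_{rε}(x̂) where x̂ = (0, i₀/κ), r, ε, i₀ > 0 and 4rε ≤ i₀/κ. Then E(ϱ) := (1/(4π)) ∬ ln(|x − ȳ|/|x − y|) ϱ(x) ϱ(y) dx dy ≥ (κ²/(4π)) ln(i₀/(2rκε)). -/
open MeasureTheory

/-- The upper half-plane. -/
def UHP : Set (ℝ × ℝ) := {x | 0 < x.2}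

/-- Euclidean norm on ℝ². -/
noncomputable def nrm (x : ℝ × ℝ) : ℝ := Real.sqrt (x.1 ^ 2 + x.2 ^ 2)

lemma nrm_eq_abs (p : ℝ × ℝ) : nrm p = ‖(⟨p.1, p.2⟩ : ℂ)‖ := by
  rw [Complex.norm_def, Complex.normSq_mk, nrm]
  ring_nf

lemma nrm_nonneg (p : ℝ × ℝ) : 0 ≤ nrm p := Real.sqrt_nonneg _

lemma abs_snd_le_nrm (p : ℝ × ℝ) : |p.2| ≤ nrm p := by
  rw [nrm, ← Real.sqrt_sq_eq_abs]
  exact Real.sqrt_le_sqrt (by nlinarith [sq_nonneg p.1])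

lemma nrm_triangle (a b : ℝ × ℝ) : nrm (a - b) ≤ nrm a + nrm b := by
  rw [nrm_eq_abs, nrm_eq_abs, nrm_eq_abs]
  have : (⟨(a-b).1, (a-b).2⟩ : ℂ) = ⟨a.1, a.2⟩ - ⟨b.1, b.2⟩ := by
    apply Complex.ext <;> simp
  rw [this]
  exact norm_sub_le _ _

lemma nrm_pos {p : ℝ × ℝ} (hp : p ≠ 0) : 0 < nrm p := by
  rw [nrm]
  apply Real.sqrt_pos.2
  have h : p.1 ≠ 0 ∨ p.2 ≠ 0 := by
    by_contra hc
    push_neg at hc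
    exact hp (Prod.ext hc.1 hc.2)
  rcases h with h | h <;> nlinarith [sq_nonneg p.1, sq_nonneg p.2, pow_pos (abs_pos.2 h) 2, sq_abs p.1, sq_abs p.2]

theorem energy_lower_bound (ϱ : ℝ × ℝ → ℝ) (κ i₀ r ε : ℝ)
    (hκ : 0 < κ) (hi₀ : 0 < i₀) (hr : 0 < r) (hε : 0 < ε)
    (hnonneg : ∀ x, 0 ≤ ϱ x) (hint : Integrable ϱ)
    (hmass : ∫ x, ϱ x = κ)
    (hsupp : Function.support ϱ ⊆ {x : ℝ × ℝ | nrm (x - (0, i₀ / κ)) ≤ r * ε})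
    (hsmall : 4 * r * ε ≤ i₀ / κ)
    (hE : IntegrableOn (fun z : (ℝ × ℝ) × (ℝ × ℝ) =>
        Real.log (nrm (z.1 - (z.2.1, -z.2.2)) / nrm (z.1 - z.2)) * ϱ z.1 * ϱ z.2)
      (UHP ×ˢ UHP)) :
    (1 / (4 * Real.pi)) * ∫ x in UHP, ∫ y in UHP,
        Real.log (nrm (x - (y.1, -y.2)) / nrm (x - y)) * ϱ x * ϱ y
      ≥ (κ ^ 2 / (4 * Real.pi)) * Real.log (i₀ / (2 * r * κ * ε)) := by
  set c := Real.log (i₀ / (2 * r * κ * ε)) with hc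
  have hiκ : 0 < i₀ / κ := div_pos hi₀ hκ
  have hrε : 0 < r * ε := mul_pos hr hε
  -- support in UHP
  have hsuppU : Function.support ϱ ⊆ UHP := by
    intro x hx
    have h1 := hsupp hx
    have h2 : |x.2 - i₀ / κ| ≤ r * ε := by
      have := abs_snd_le_nrm (x - (0, i₀ / κ))
      simpa using this.trans h1
    have := abs_le.1 h2
    have : i₀ / κ - r * ε ≤ x.2 := by linarith [this.1]
    simp only [UHP, Set.mem_setOf_eq]
    linarith
  -- mass on UHP
  have hmassU : ∫ x in UHP, ϱ x = κ := by
    rw [setIntegral_eq_integral_of_forall_compl_eq_zero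
      (fun x hx => Function.notMem_support.1 (fun hs => hx (hsuppU hs)))]
    exact hmass
  -- key pointwise bound
  have key : ∀ x y : ℝ × ℝ, x ≠ y →
      c * ϱ x * ϱ y ≤ Real.log (nrm (x - (y.1, -y.2)) / nrm (x - y)) * ϱ x * ϱ y := by
    intro x y hxy
    rcases eq_or_ne (ϱ x) 0 with h | hx0
    · simp [h]
    rcases eq_or_ne (ϱ y) 0 with h | hy0
    · simp [h]
    have hxs := hsupp (Function.mem_support.2 hx0)
    have hys := hsupp (Function.mem_support.2 hy0)
    simp only [Set.mem_setOf_eq] at hxs hys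
    -- distance bound
    have hd : nrm (x - y) ≤ 2 * (r * ε) := by
      have h1 : x - y = (x - (0, i₀/κ)) - (y - (0, i₀/κ)) := by abel
      rw [h1]
      calc nrm _ ≤ nrm (x - (0, i₀/κ)) + nrm (y - (0, i₀/κ)) := nrm_triangle _ _
        _ ≤ 2 * (r * ε) := by linarith
    have hdpos : 0 < nrm (x - y) := nrm_pos (sub_ne_zero.2 hxy)
    -- second coordinates
    have hx2 : i₀ / κ - r * ε ≤ x.2 := by
      have h2 : |x.2 - i₀ / κ| ≤ r * ε := by
        have := abs_snd_le_nrm (x - (0, i₀ / κ)); simpa using this.trans hxs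
      linarith [(abs_le.1 h2).1]
    have hy2 : i₀ / κ - r * ε ≤ y.2 := by
      have h2 : |y.2 - i₀ / κ| ≤ r * ε := by
        have := abs_snd_le_nrm (y - (0, i₀ / κ)); simpa using this.trans hys
      linarith [(abs_le.1 h2).1]
    have hn : i₀ / κ ≤ nrm (x - (y.1, -y.2)) := by
      have h1 : (x - (y.1, -y.2)).2 = x.2 + y.2 := by simp
      have h2 := abs_snd_le_nrm (x - (y.1, -y.2))
      rw [h1] at h2
      have h3 : x.2 + y.2 ≤ |x.2 + y.2| := le_abs_self _
      linarith
    have hratio : i₀ / (2 * r * κ * ε) ≤ nrm (x - (y.1, -y.2)) / nrm (x - y) := by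
      have h1 : i₀ / (2 * r * κ * ε) = (i₀ / κ) / (2 * (r * ε)) := by
        rw [div_eq_div_iff (by positivity) (by positivity)]; field_simp
      rw [h1]
      exact div_le_div₀ (le_trans hiκ.le hn) hn hdpos (by linarith)
    have hcpos : 0 < i₀ / (2 * r * κ * ε) := by
      rw [show i₀ / (2 * r * κ * ε) = (i₀ / κ) / (2 * (r * ε)) by
        rw [div_eq_div_iff (by positivity) (by positivity)]; field_simp]
      positivity
    have hlog : c ≤ Real.log (nrm (x - (y.1, -y.2)) / nrm (x - y)) :=
      Real.log_le_log hcpos hratio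
    have hprod : 0 ≤ ϱ x * ϱ y := mul_nonneg (hnonneg x) (hnonneg y)
    calc c * ϱ x * ϱ y = c * (ϱ x * ϱ y) := by ring
      _ ≤ Real.log (nrm (x - (y.1, -y.2)) / nrm (x - y)) * (ϱ x * ϱ y) :=
        mul_le_mul_of_nonneg_right hlog hprod
      _ = _ := by ring
  -- Fubini setup
  have hE' : Integrable (fun z : (ℝ × ℝ) × (ℝ × ℝ) =>
      Real.log (nrm (z.1 - (z.2.1, -z.2.2)) / nrm (z.1 - z.2)) * ϱ z.1 * ϱ z.2)
      ((volume.restrict UHP).prod (volume.restrict UHP)) := by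
    rw [Measure.prod_restrict]
    rw [IntegrableOn, Measure.volume_eq_prod] at hE
    exact hE
  have hsing : ∀ x : ℝ × ℝ, (volume.restrict UHP) {x} = 0 := fun x =>
    measure_singleton x
  -- inner bound (a.e.)
  have hinner : ∀ᵐ x ∂(volume.restrict UHP),
      c * κ * ϱ x ≤ ∫ y in UHP, Real.log (nrm (x - (y.1, -y.2)) / nrm (x - y)) * ϱ x * ϱ y := by
    filter_upwards [hE'.prod_right_ae] with x hx
    have hGint : Integrable (fun y => c * ϱ x * ϱ y) (volume.restrict UHP) :=
      (hint.restrict.const_mul (c * ϱ x)).congr (by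
        filter_upwards with y; ring)
    have hmono : ∫ y in UHP, c * ϱ x * ϱ y ≤
        ∫ y in UHP, Real.log (nrm (x - (y.1, -y.2)) / nrm (x - y)) * ϱ x * ϱ y := by
      apply integral_mono_ae hGint hx
      have : ∀ᵐ y ∂(volume.restrict UHP), y ≠ x := by
        rw [Filter.eventually_iff, mem_ae_iff]
        apply measure_mono_null (fun y hy => by simpa using hy) (hsing x)
      filter_upwards [this] with y hy
      exact key x y (fun h => hy h.symm)
    refine le_trans (le_of_eq ?_) hmono
    rw [integral_const_mul, hmassU]
    ring
  -- outer bound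
  have hFint : Integrable (fun x => ∫ y in UHP,
      Real.log (nrm (x - (y.1, -y.2)) / nrm (x - y)) * ϱ x * ϱ y) (volume.restrict UHP) :=
    hE'.integral_prod_left
  have hGint : Integrable (fun x => c * κ * ϱ x) (volume.restrict UHP) :=
    hint.restrict.const_mul (c * κ)
  have houter : ∫ x in UHP, c * κ * ϱ x ≤ ∫ x in UHP, ∫ y in UHP,
      Real.log (nrm (x - (y.1, -y.2)) / nrm (x - y)) * ϱ x * ϱ y :=
    integral_mono_ae hGint hFint hinner
  have hval : ∫ x in UHP, c * κ * ϱ x = c * κ ^ 2 := by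
    rw [integral_const_mul, hmassU]; ring
  rw [hval] at houter
  have hπ : 0 < 4 * Real.pi := by positivity
  rw [ge_iff_le, show (κ ^ 2 / (4 * Real.pi)) * c = (1 / (4 * Real.pi)) * (c * κ ^ 2) by ring]
  exact mul_le_mul_of_nonneg_left houter (by positivity)
end

section
/- Let ζ ∈ L^p(Π) (p > 2) be nonnegative with support of measure at most πr²ε², and let φ⁺ ∈ H¹₀(Π) be nonnegative with support contained in the support of ζ, satisfying ∫_Π ζ φ⁺ dx = ∫_Π |∇φ⁺|² dx. If ‖ζ‖_{L^p(Π)} = ε^{2/p−2}‖ϱ‖_{L^p} for some fixed ϱ, then T := (1/2)∫_Π ζφ⁺ dx satisfies T ≤ C where C depends only on p, r, and ‖ϱ‖_{L^p}, but not on ε. -/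
open MeasureTheory
open scoped ENNReal

lemma countable_zero_deriv_ne (g : ℝ → ℝ) (hg : Differentiable ℝ g) :
    Set.Countable {t | g t = 0 ∧ deriv g t ≠ 0} := by
  set B := {t | g t = 0 ∧ deriv g t ≠ 0} with hB
  -- each point of B has a punctured nbhd where g ≠ 0
  have key : ∀ t ∈ B, ∃ δ > 0, ∀ s, s ≠ t → |s - t| < δ → g s ≠ 0 := by
    intro t ht
    have hd : HasDerivAt g (deriv g t) t := (hg t).hasDerivAt
    rw [hasDerivAt_iff_tendsto_slope] at hd
    have h1 : ∀ᶠ s in nhdsWithin t {t}ᶜ, slope g t s ≠ 0 :=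
      hd (isOpen_ne.mem_nhds ht.2)
    rw [Filter.eventually_iff, Metric.mem_nhdsWithin_iff] at h1
    obtain ⟨δ, hδ, h2⟩ := h1
    refine ⟨δ, hδ, fun s hs hd' h0 => ?_⟩
    have := h2 (Set.mem_inter (by simpa [Metric.mem_ball, Real.dist_eq] using hd') (by simpa using hs))
    apply this
    simp [slope_def_field, h0, ht.1]
  -- choose rational interval isolating each point
  have : ∀ t : B, ∃ ab : ℚ × ℚ, (ab.1 : ℝ) < t ∧ (t : ℝ) < ab.2 ∧
      ∀ s, s ≠ (t : ℝ) → (ab.1 : ℝ) < s → s < ab.2 → g s ≠ 0 := by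
    rintro ⟨t, ht⟩
    obtain ⟨δ, hδ, h2⟩ := key t ht
    obtain ⟨a, ha1, ha2⟩ := exists_rat_btwn (show t - δ < t by linarith)
    obtain ⟨b, hb1, hb2⟩ := exists_rat_btwn (show t < t + δ by linarith)
    refine ⟨(a, b), ha2, hb1, fun s hs h1 h2' => h2 s hs (by rw [abs_lt]; constructor <;> nlinarith)⟩
  choose f hf1 hf2 hf3 using this
  have hinj : Function.Injective f := by
    rintro ⟨t, ht⟩ ⟨t', ht'⟩ h
    by_contra hne
    have htne : (t : ℝ) ≠ t' := fun hc => hne (by ext; exact hc)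
    have := hf3 ⟨t, ht⟩ t' htne.symm (by rw [h]; exact hf1 ⟨t', ht'⟩) (by rw [h]; exact hf2 ⟨t', ht'⟩)
    exact this ht'.1
  exact Set.countable_coe_iff.mp hinj.countable

lemma line_bound {g : ℝ → ℝ} (hg : Differentiable ℝ g)
    (hfin : volume (Function.support g) < ⊤) {h : ℝ → ℝ≥0∞} 
    (hb : ∀ t, g t ≠ 0 → ENNReal.ofReal |deriv g t| ≤ h t) (x : ℝ) :
    ENNReal.ofReal (g x) ≤ ∫⁻ t, h t := by
  by_cases htop : (∫⁻ t, h t) = ⊤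
  · simp [htop]
  -- a.e. bound on |deriv g|
  have hc := countable_zero_deriv_ne g hg
  have hae : ∀ᵐ t, ENNReal.ofReal |deriv g t| ≤ h t := by
    have h0 : volume {t | g t = 0 ∧ deriv g t ≠ 0} = 0 := hc.measure_zero _
    filter_upwards [measure_eq_zero_iff_ae_notMem.mp h0] with t ht
    by_cases hgt : g t = 0
    · have : deriv g t = 0 := by
        by_contra hd; exact ht ⟨hgt, hd⟩
      simp [this]
    · exact hb t hgt
  have hint : (∫⁻ t, ENNReal.ofReal |deriv g t|) ≤ ∫⁻ t, h t := lintegral_mono_ae hae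
  have hInt : Integrable (deriv g) := by
    refine ⟨(measurable_deriv g).aestronglyMeasurable, ?_⟩
    rw [hasFiniteIntegral_iff_norm]
    calc (∫⁻ t, ENNReal.ofReal ‖deriv g t‖) = ∫⁻ t, ENNReal.ofReal |deriv g t| := by
          simp [Real.norm_eq_abs]
      _ ≤ ∫⁻ t, h t := hint
      _ < ⊤ := lt_top_iff_ne_top.mpr htop
  -- find a zero below x
  have hex : ∃ x₀, x₀ < x ∧ g x₀ = 0 := by
    by_contra h'
    push_neg at h'
    have hsub : Set.Iio x ⊆ Function.support g := fun t ht => h' t ht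
    have := (measure_mono hsub).trans_lt hfin
    simp [Real.volume_Iio] at this
  obtain ⟨x₀, hx₀x, hx₀⟩ := hex
  have hFTC : (∫ t in x₀..x, deriv g t) = g x - g x₀ :=
    intervalIntegral.integral_eq_sub_of_hasDerivAt (fun t _ => (hg t).hasDerivAt)
      (hInt.intervalIntegrable)
  have h1 : g x ≤ ∫ t, |deriv g t| := by
    calc g x = ∫ t in x₀..x, deriv g t := by rw [hFTC, hx₀, sub_zero]
      _ ≤ |∫ t in x₀..x, deriv g t| := le_abs_self _
      _ ≤ ∫ t in x₀..x, |deriv g t| := intervalIntegral.abs_integral_le_integral_abs hx₀x.le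
      _ = ∫ t in Set.Ioc x₀ x, |deriv g t| := intervalIntegral.integral_of_le hx₀x.le
      _ ≤ ∫ t, |deriv g t| := setIntegral_le_integral hInt.abs
          (Filter.Eventually.of_forall fun t => abs_nonneg _)
  calc ENNReal.ofReal (g x) ≤ ENNReal.ofReal (∫ t, |deriv g t|) := ENNReal.ofReal_le_ofReal h1
    _ = ∫⁻ t, ENNReal.ofReal |deriv g t| :=
        ofReal_integral_eq_lintegral_ofReal hInt.abs (Filter.Eventually.of_forall fun t => abs_nonneg _)
    _ ≤ ∫⁻ t, h t := hint

lemma grid_bound {φ : ℝ × ℝ → ℝ} (hφ : Differentiable ℝ φ)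
    (hfin : volume (Function.support φ) < ⊤) :
    (∫⁻ z : ℝ × ℝ, ENNReal.ofReal (φ z) ^ (2:ℝ)) ≤
      (∫⁻ z : ℝ × ℝ, (Function.support φ).indicator
        (fun w => ENNReal.ofReal ‖fderiv ℝ φ w‖) z) ^ 2 := by
  set S := Function.support φ with hS
  have hSo : IsOpen S := hφ.continuous.isOpen_support
  have hSm : MeasurableSet S := hSo.measurableSet
  set H : ℝ × ℝ → ℝ≥0∞ := S.indicator (fun w => ENNReal.ofReal ‖fderiv ℝ φ w‖) with hH
  have hHmeas : Measurable H := ((measurable_fderiv ℝ φ).norm.ennreal_ofReal).indicator hSm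
  have hvol : (volume : Measure (ℝ × ℝ)) = (volume : Measure ℝ).prod volume :=
    Measure.volume_eq_prod ℝ ℝ
  set F : ℝ → ℝ≥0∞ := fun y => ∫⁻ t, H (t, y) with hF
  set G : ℝ → ℝ≥0∞ := fun x => ∫⁻ s, H (x, s) with hG
  set N : ℝ≥0∞ := ∫⁻ z, H z with hN
  have hFmeas : Measurable F := hHmeas.lintegral_prod_left'
  have hGmeas : Measurable G := hHmeas.lintegral_prod_right'
  have hFint : (∫⁻ y, F y) = N := by
    rw [hN, hvol, lintegral_prod_symm _ hHmeas.aemeasurable]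
  have hGint : (∫⁻ x, G x) = N := by
    rw [hN, hvol, lintegral_prod _ hHmeas.aemeasurable]
  -- a.e. slices are finite
  have hSfin : ((volume : Measure ℝ).prod volume) S < ⊤ := by rw [← hvol]; exact hfin
  have hgoodY : ∀ᵐ y : ℝ, volume ((fun t => (t, y)) ⁻¹' S) < ⊤ := by
    have h1 : (∫⁻ y, volume ((fun t => (t, y)) ⁻¹' S)) < ⊤ := by
      rw [← Measure.prod_apply_symm hSm]; exact hSfin
    exact ae_lt_top (measurable_measure_prodMk_right hSm) h1.ne
  have hgoodX : ∀ᵐ x : ℝ, volume (Prod.mk x ⁻¹' S) < ⊤ := by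
    have h1 : (∫⁻ x, volume (Prod.mk x ⁻¹' S)) < ⊤ := by
      rw [← Measure.prod_apply hSm]; exact hSfin
    exact ae_lt_top (measurable_measure_prodMk_left hSm) h1.ne
  -- pointwise bounds along lines
  have claimY : ∀ y : ℝ, volume ((fun t => (t, y)) ⁻¹' S) < ⊤ →
      ∀ x : ℝ, ENNReal.ofReal (φ (x, y)) ≤ F y := by
    intro y hy x
    have hg : Differentiable ℝ (fun t : ℝ => φ (t, y)) :=
      hφ.comp (differentiable_id.prodMk (differentiable_const y))
    refine line_bound hg ?_ ?_ x
    · exact hy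
    · intro t hgt
      have hder : HasDerivAt (fun t : ℝ => φ (t, y)) ((fderiv ℝ φ (t, y)) (1, 0)) t :=
        (hφ (t, y)).hasFDerivAt.comp_hasDerivAt t ((hasDerivAt_id t).prodMk (hasDerivAt_const t y))
      have hmem : (t, y) ∈ S := hgt
      rw [hder.deriv, hH, Set.indicator_of_mem hmem]
      refine ENNReal.ofReal_le_ofReal ?_
      calc |(fderiv ℝ φ (t, y)) (1, 0)| ≤ ‖fderiv ℝ φ (t, y)‖ * ‖((1 : ℝ), (0 : ℝ))‖ :=
            (fderiv ℝ φ (t, y)).le_opNorm _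
        _ = ‖fderiv ℝ φ (t, y)‖ := by
            simp [Prod.norm_def]
  have claimX : ∀ x : ℝ, volume (Prod.mk x ⁻¹' S) < ⊤ →
      ∀ y : ℝ, ENNReal.ofReal (φ (x, y)) ≤ G x := by
    intro x hx y
    have hg : Differentiable ℝ (fun s : ℝ => φ (x, s)) :=
      hφ.comp ((differentiable_const x).prodMk differentiable_id)
    refine line_bound hg ?_ ?_ y
    · exact hx
    · intro s hgs
      have hder : HasDerivAt (fun s : ℝ => φ (x, s)) ((fderiv ℝ φ (x, s)) (0, 1)) s :=
        (hφ (x, s)).hasFDerivAt.comp_hasDerivAt s ((hasDerivAt_const s x).prodMk (hasDerivAt_id s))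
      have hmem : (x, s) ∈ S := hgs
      rw [hder.deriv, hH, Set.indicator_of_mem hmem]
      refine ENNReal.ofReal_le_ofReal ?_
      calc |(fderiv ℝ φ (x, s)) (0, 1)| ≤ ‖fderiv ℝ φ (x, s)‖ * ‖((0 : ℝ), (1 : ℝ))‖ :=
            (fderiv ℝ φ (x, s)).le_opNorm _
        _ = ‖fderiv ℝ φ (x, s)‖ := by
            simp [Prod.norm_def]
  -- main computation
  have hφmeas : Measurable fun z : ℝ × ℝ => ENNReal.ofReal (φ z) ^ (2:ℝ) :=
    (hφ.continuous.measurable.ennreal_ofReal).pow_const _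
  calc (∫⁻ z : ℝ × ℝ, ENNReal.ofReal (φ z) ^ (2:ℝ))
      = ∫⁻ x, ∫⁻ y, ENNReal.ofReal (φ (x, y)) ^ (2:ℝ) := by
        rw [hvol, lintegral_prod _ hφmeas.aemeasurable]
    _ ≤ ∫⁻ x, G x * N := by
        refine lintegral_mono_ae ?_
        filter_upwards [hgoodX] with x hx
        calc (∫⁻ y, ENNReal.ofReal (φ (x, y)) ^ (2:ℝ)) ≤ ∫⁻ y, G x * F y := by
              refine lintegral_mono_ae ?_
              filter_upwards [hgoodY] with y hy
              have h2 : ENNReal.ofReal (φ (x, y)) ^ (2:ℝ)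
                  = ENNReal.ofReal (φ (x, y)) * ENNReal.ofReal (φ (x, y)) := by
                rw [show (2:ℝ) = ((2:ℕ):ℝ) by norm_num, ENNReal.rpow_natCast, sq]
              rw [h2]
              exact mul_le_mul' (claimX x hx y) (claimY y hy x)
          _ = G x * N := by rw [lintegral_const_mul _ hFmeas, hFint]
    _ = N * N := by rw [lintegral_mul_const _ hGmeas, hGint, mul_comm]
    _ = N ^ 2 := (sq N).symm


theorem kinetic_energy_core_uniform_bound (p r A : ℝ)
    (hp : 2 < p) (hr : 0 < r) (hA : 0 ≤ A) :
    ∃ C : ℝ, 0 < C ∧ ∀ (ε : ℝ) (ζ φ : ℝ × ℝ → ℝ), 0 < ε →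
      (∀ x, 0 ≤ ζ x) → (∀ x, 0 ≤ φ x) → Differentiable ℝ φ →
      Function.support ζ ⊆ UHP →
      Function.support φ ⊆ Function.support ζ →
      volume (Function.support ζ) ≤ ENNReal.ofReal (Real.pi * r ^ 2 * ε ^ 2) →
      eLpNorm ζ (ENNReal.ofReal p) volume = ENNReal.ofReal (ε ^ (2 / p - 2) * A) →
      Integrable (fun x => ζ x * φ x) →
      Integrable (fun x : ℝ × ℝ => ‖fderiv ℝ φ x‖ ^ 2) →
      (∫ x : ℝ × ℝ, ζ x * φ x) = ∫ x : ℝ × ℝ, ‖fderiv ℝ φ x‖ ^ 2 →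
      (1 / 2) * ∫ x : ℝ × ℝ, ζ x * φ x ≤ C := by
  have hp0 : 0 < p := by linarith
  have hp1 : 1 < p := by linarith
  set q : ℝ := p / (p - 1) with hq
  have hq1 : 1 < q := by
    rw [hq, lt_div_iff₀ (by linarith)]; linarith
  have hq2 : q < 2 := by
    rw [hq, div_lt_iff₀ (by linarith)]; linarith
  have hq0 : 0 < q := by linarith
  have hpq : Real.HolderConjugate p q := (Real.holderConjugate_iff_eq_conjExponent hp1).mpr hq
  have hqinv : 1 / q = 1 - 1 / p := by rw [hq]; field_simp
  set c₀ : ℝ := A * (Real.pi * r ^ 2) ^ (1 / q) with hc₀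
  have hπr : 0 < Real.pi * r ^ 2 := by positivity
  have hc₀0 : 0 ≤ c₀ := by positivity
  refine ⟨c₀ ^ 2 + 1, by positivity, ?_⟩
  intro ε ζ φ hε hζ0 hφ0 hφd hζU hsupp hvolζ hnorm hint1 hint2 heq
  set I : ℝ := ∫ x : ℝ × ℝ, ζ x * φ x with hI
  have hI0 : 0 ≤ I := integral_nonneg fun x => mul_nonneg (hζ0 x) (hφ0 x)
  -- suffices to bound I by c₀ ^ 2
  suffices hIb : I ≤ c₀ ^ 2 by nlinarith
  -- measure of support of φ
  set S : Set (ℝ × ℝ) := Function.support φ with hS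
  have hSo : IsOpen S := hφd.continuous.isOpen_support
  have hSm : MeasurableSet S := hSo.measurableSet
  set m : ℝ≥0∞ := ENNReal.ofReal (Real.pi * r ^ 2 * ε ^ 2) with hm
  have hμS : volume S ≤ m := le_trans (measure_mono hsupp) hvolζ
  have hμSfin : volume S < ⊤ := hμS.trans_lt ENNReal.ofReal_lt_top
  -- basic ENNReal quantities
  set X : ℝ≥0∞ := ∫⁻ z : ℝ × ℝ, ENNReal.ofReal (ζ z * φ z) with hX
  have hXI : ENNReal.ofReal I = X :=
    ofReal_integral_eq_lintegral_ofReal hint1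
      (Filter.Eventually.of_forall fun z => mul_nonneg (hζ0 z) (hφ0 z))
  have hXfin : X ≠ ⊤ := by rw [← hXI]; exact ENNReal.ofReal_ne_top
  -- Dirichlet energy
  set D : ℝ≥0∞ := ∫⁻ z : ℝ × ℝ, ENNReal.ofReal ‖fderiv ℝ φ z‖ ^ (2:ℝ) with hD
  have hDX : D = X := by
    rw [← hXI, heq, ofReal_integral_eq_lintegral_ofReal hint2
      (Filter.Eventually.of_forall fun z => sq_nonneg _), hD]
    congr 1
    ext z
    rw [show ((2:ℝ)) = ((2:ℕ):ℝ) by norm_num, ENNReal.rpow_natCast,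
      ← ENNReal.ofReal_pow (norm_nonneg _)]
  -- modified zeta (a.e. measurable version supported where φ ≠ 0)
  set ζ' : ℝ × ℝ → ℝ := fun z => ζ z * φ z * (φ z)⁻¹ with hζ'
  have hζ'0 : ∀ z, 0 ≤ ζ' z := fun z =>
    mul_nonneg (mul_nonneg (hζ0 z) (hφ0 z)) (inv_nonneg.mpr (hφ0 z))
  have hζ'le : ∀ z, ζ' z ≤ ζ z := by
    intro z
    by_cases h : φ z = 0
    · simp [hζ', h]; exact hζ0 z
    · refine le_of_eq ?_
      show ζ z * φ z * (φ z)⁻¹ = ζ z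
      rw [mul_assoc, mul_inv_cancel₀ h, mul_one]
  have hζ'φ : ∀ z, ζ' z * φ z = ζ z * φ z := by
    intro z
    by_cases h : φ z = 0
    · simp [hζ', h]
    · show ζ z * φ z * (φ z)⁻¹ * φ z = ζ z * φ z
      rw [mul_assoc, inv_mul_cancel₀ h, mul_one]
  have hζ'meas : AEMeasurable (fun z => ENNReal.ofReal (ζ' z)) volume :=
    (hint1.aestronglyMeasurable.aemeasurable.mul
      hφd.continuous.measurable.inv.aemeasurable).ennreal_ofReal
  have hφmeas : Measurable fun z : ℝ × ℝ => ENNReal.ofReal (φ z) :=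
    hφd.continuous.measurable.ennreal_ofReal
  set B : ℝ≥0∞ := ENNReal.ofReal (ε ^ (2 / p - 2) * A) with hB
  -- Step 1: Hölder
  have holder1 : X ≤ (∫⁻ z : ℝ × ℝ, ENNReal.ofReal (ζ' z) ^ p) ^ (1/p) *
      (∫⁻ z : ℝ × ℝ, ENNReal.ofReal (φ z) ^ q) ^ (1/q) := by
    have h := ENNReal.lintegral_mul_le_Lp_mul_Lq volume hpq hζ'meas hφmeas.aemeasurable
    refine le_trans (le_of_eq ?_) h
    rw [hX]
    congr 1
    ext z
    rw [Pi.mul_apply, ← ENNReal.ofReal_mul (hζ'0 z), hζ'φ z]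
  -- Step 2: bound Lp factor by the eLpNorm hypothesis
  have hLp : (∫⁻ z : ℝ × ℝ, ENNReal.ofReal (ζ' z) ^ p) ^ (1/p) ≤ B := by
    rw [← hnorm, eLpNorm_eq_lintegral_rpow_enorm_toReal
      (by simp only [ne_eq, ENNReal.ofReal_eq_zero, not_le]; linarith)
      ENNReal.ofReal_ne_top, ENNReal.toReal_ofReal hp0.le]
    refine ENNReal.rpow_le_rpow (lintegral_mono fun z => ?_) (by positivity)
    rw [Real.enorm_eq_ofReal (hζ0 z)]
    exact ENNReal.rpow_le_rpow (ENNReal.ofReal_le_ofReal (hζ'le z)) hp0.le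
  -- Step 3: Hölder from q to 2 using the support
  set J2 : ℝ≥0∞ := ∫⁻ z : ℝ × ℝ, ENNReal.ofReal (φ z) ^ (2:ℝ) with hJ2
  have h32 : (∫⁻ z : ℝ × ℝ, ENNReal.ofReal (φ z) ^ q) ≤
      J2 ^ (q/2) * (volume S) ^ (1 - q/2) := by
    have hconj : Real.HolderConjugate (2/q) (2/(2-q)) := by
      refine Real.holderConjugate_iff.mpr ⟨?_, ?_⟩
      · rw [lt_div_iff₀ hq0]; linarith
      · rw [inv_div, inv_div]; field_simp; ring
    have hfmeas : AEMeasurable (fun z : ℝ × ℝ => ENNReal.ofReal (φ z) ^ q) volume :=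
      (hφmeas.pow_const q).aemeasurable
    have hgmeas : AEMeasurable (S.indicator (1 : ℝ × ℝ → ℝ≥0∞)) volume :=
      (aemeasurable_one.indicator hSm)
    have h := ENNReal.lintegral_mul_le_Lp_mul_Lq volume hconj hfmeas hgmeas
    have hLHS : (∫⁻ z : ℝ × ℝ, ((fun z : ℝ × ℝ => ENNReal.ofReal (φ z) ^ q) *
        (S.indicator (1 : ℝ × ℝ → ℝ≥0∞))) z) = ∫⁻ z : ℝ × ℝ, ENNReal.ofReal (φ z) ^ q := by
      congr 1
      ext z
      rw [Pi.mul_apply]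
      by_cases hz : z ∈ S
      · simp [Set.indicator_of_mem hz]
      · have hz0 : φ z = 0 := Function.notMem_support.mp hz
        simp [Set.indicator_of_notMem hz, hz0, ENNReal.zero_rpow_of_pos hq0]
    have hR1 : (∫⁻ z : ℝ × ℝ, ((fun z : ℝ × ℝ => ENNReal.ofReal (φ z) ^ q) z) ^ (2/q)) = J2 := by
      rw [hJ2]
      congr 1
      ext z
      rw [← ENNReal.rpow_mul]
      congr 1
      field_simp
    have hR2 : (∫⁻ z : ℝ × ℝ, ((S.indicator (1 : ℝ × ℝ → ℝ≥0∞)) z) ^ (2/(2-q))) = volume S := by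
      rw [← lintegral_indicator_one hSm]
      congr 1
      ext z
      by_cases hz : z ∈ S
      · simp [Set.indicator_of_mem hz]
      · simp [Set.indicator_of_notMem hz, ENNReal.zero_rpow_of_pos (show (0:ℝ) < 2/(2-q) from div_pos two_pos (by linarith))]
    rw [hLHS, hR1, hR2] at h
    refine h.trans (le_of_eq ?_)
    congr 1
    · congr 1
      rw [one_div_div]
    · rw [one_div_div]
      congr 1
      field_simp
  -- Step 4: grid bound
  set N : ℝ≥0∞ := ∫⁻ z : ℝ × ℝ, S.indicator (fun w => ENNReal.ofReal ‖fderiv ℝ φ w‖) z with hN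
  have h4 : J2 ≤ N ^ 2 := grid_bound hφd hμSfin
  -- Step 5: Cauchy-Schwarz for N
  have h5 : N ≤ (volume S) ^ ((1:ℝ)/2) * D ^ ((1:ℝ)/2) := by
    have hconj : Real.HolderConjugate 2 2 := Real.HolderConjugate.two_two
    have hgmeas : AEMeasurable (S.indicator (1 : ℝ × ℝ → ℝ≥0∞)) volume :=
      (aemeasurable_one.indicator hSm)
    have hfmeas : AEMeasurable (fun z : ℝ × ℝ => ENNReal.ofReal ‖fderiv ℝ φ z‖) volume :=
      ((measurable_fderiv ℝ φ).norm.ennreal_ofReal).aemeasurable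
    have h := ENNReal.lintegral_mul_le_Lp_mul_Lq volume hconj hgmeas hfmeas
    have hLHS : (∫⁻ z : ℝ × ℝ, ((S.indicator (1 : ℝ × ℝ → ℝ≥0∞)) *
        (fun z : ℝ × ℝ => ENNReal.ofReal ‖fderiv ℝ φ z‖)) z) = N := by
      rw [hN]
      congr 1
      ext z
      rw [Pi.mul_apply]
      by_cases hz : z ∈ S
      · simp [Set.indicator_of_mem hz]
      · simp [Set.indicator_of_notMem hz]
    have hR1 : (∫⁻ z : ℝ × ℝ, ((S.indicator (1 : ℝ × ℝ → ℝ≥0∞)) z) ^ (2:ℝ)) = volume S := by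
      rw [← lintegral_indicator_one hSm]
      congr 1
      ext z
      by_cases hz : z ∈ S
      · simp [Set.indicator_of_mem hz]
      · simp [Set.indicator_of_notMem hz, ENNReal.zero_rpow_of_pos (show (0:ℝ) < 2 by norm_num)]
    rw [hLHS, hR1] at h
    exact h.trans (le_of_eq (by rw [hD]))
  -- combine the chain
  have hq2' : (0:ℝ) ≤ 1 - q/2 := by linarith
  have hchain : X ≤ ENNReal.ofReal c₀ * X ^ ((1:ℝ)/2) := by
    have e1 : X ≤ B * (J2 ^ (q/2) * (volume S) ^ (1 - q/2)) ^ (1/q) := by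
      refine holder1.trans ?_
      exact mul_le_mul' hLp (ENNReal.rpow_le_rpow h32 (by positivity))
    have e2 : (J2 ^ (q/2) * (volume S) ^ (1 - q/2)) ^ (1/q) =
        J2 ^ ((1:ℝ)/2) * (volume S) ^ ((1 - q/2) * (1/q)) := by
      rw [ENNReal.mul_rpow_of_nonneg _ _ (by positivity), ← ENNReal.rpow_mul, ← ENNReal.rpow_mul]
      congr 2
      field_simp
    have e3 : J2 ^ ((1:ℝ)/2) ≤ N := by
      calc J2 ^ ((1:ℝ)/2) ≤ (N ^ 2) ^ ((1:ℝ)/2) := ENNReal.rpow_le_rpow h4 (by positivity)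
        _ = N := by
          rw [← ENNReal.rpow_natCast N 2, ← ENNReal.rpow_mul]
          norm_num
    have e4 : X ≤ B * ((volume S) ^ ((1:ℝ)/2) * D ^ ((1:ℝ)/2) *
        (volume S) ^ ((1 - q/2) * (1/q))) := by
      refine e1.trans ?_
      rw [e2]
      exact mul_le_mul_right (mul_le_mul_left (e3.trans h5) _) _
    have e5 : (volume S) ^ ((1:ℝ)/2) * D ^ ((1:ℝ)/2) * (volume S) ^ ((1 - q/2) * (1/q)) =
        (volume S) ^ ((1:ℝ)/q) * D ^ ((1:ℝ)/2) := by
      rw [mul_right_comm, ← ENNReal.rpow_add_of_nonneg _ _ (by positivity) (by positivity)]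
      congr 2
      field_simp
      ring
    have e6 : X ≤ B * ((volume S) ^ ((1:ℝ)/q) * D ^ ((1:ℝ)/2)) := by
      refine e4.trans (le_of_eq ?_)
      rw [e5]
    have e7 : X ≤ B * (m ^ ((1:ℝ)/q) * X ^ ((1:ℝ)/2)) := by
      refine e6.trans ?_
      rw [hDX]
      exact mul_le_mul_right (mul_le_mul_left
        (ENNReal.rpow_le_rpow hμS (by positivity)) _) _
    have hK : B * m ^ ((1:ℝ)/q) = ENNReal.ofReal c₀ := by
      rw [hB, hm, ENNReal.ofReal_rpow_of_pos (by positivity),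
        ← ENNReal.ofReal_mul (by positivity)]
      congr 1
      rw [Real.mul_rpow hπr.le (sq_nonneg ε), ← Real.rpow_natCast ε 2,
        ← Real.rpow_mul hε.le, hc₀]
      rw [show ε ^ (2/p-2) * A * ((Real.pi * r^2) ^ ((1:ℝ)/q) * ε ^ (((2:ℕ):ℝ) * (1/q))) =
        A * (Real.pi * r^2) ^ ((1:ℝ)/q) * (ε ^ (2/p-2) * ε ^ (((2:ℕ):ℝ) * (1/q))) by ring]
      rw [← Real.rpow_add hε]
      rw [show (2/p - 2 + ((2:ℕ):ℝ) * (1/q)) = 0 by push_cast; rw [hqinv]; ring]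
      rw [Real.rpow_zero, mul_one]
    calc X ≤ B * m ^ ((1:ℝ)/q) * X ^ ((1:ℝ)/2) := by rw [mul_assoc]; exact e7
      _ = ENNReal.ofReal c₀ * X ^ ((1:ℝ)/2) := by rw [hK]
  -- conclude via cancellation
  have hfinal : X ≤ ENNReal.ofReal (c₀ ^ 2) := by
    rcases eq_or_ne X 0 with h0 | h0
    · simp [h0]
    · have hh0 : X ^ ((1:ℝ)/2) ≠ 0 := by
        simp only [ne_eq, ENNReal.rpow_eq_zero_iff, not_or]
        constructor
        · rintro ⟨hX0, -⟩; exact h0 hX0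
        · rintro ⟨hXt, -⟩; exact hXfin hXt
      have hht : X ^ ((1:ℝ)/2) ≠ ⊤ :=
        ENNReal.rpow_ne_top_of_nonneg (by norm_num) hXfin
      have hsplit : X = X ^ ((1:ℝ)/2) * X ^ ((1:ℝ)/2) := by
        rw [← ENNReal.rpow_add _ _ h0 hXfin]; norm_num
      have h3 : X ^ ((1:ℝ)/2) * X ^ ((1:ℝ)/2) ≤ ENNReal.ofReal c₀ * X ^ ((1:ℝ)/2) := by
        calc X ^ ((1:ℝ)/2) * X ^ ((1:ℝ)/2) = X := hsplit.symm
          _ ≤ ENNReal.ofReal c₀ * X ^ ((1:ℝ)/2) := hchain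
      have h4 : X ^ ((1:ℝ)/2) ≤ ENNReal.ofReal c₀ :=
        (ENNReal.mul_le_mul_iff_left hh0 hht).mp h3
      calc X = X ^ ((1:ℝ)/2) * X ^ ((1:ℝ)/2) := hsplit
        _ ≤ ENNReal.ofReal c₀ * ENNReal.ofReal c₀ := mul_le_mul' h4 h4
        _ = ENNReal.ofReal (c₀ ^ 2) := by rw [← ENNReal.ofReal_mul hc₀0, sq]
  rw [← hXI] at hfinal
  exact (ENNReal.ofReal_le_ofReal_iff (by positivity)).mp hfinal
end

section
/- Let ζ be a nonnegative integrable function on Π with ∫_Π ζ = κ and center of mass at x̂ = (0, i₀/κ) (i.e., ∫_Π x ζ(x) dx = κ x̂), and suppose supp(ζ) ⊆ B_δ(x̂) for some 0 < δ < i₀/(2κ). Then the quantity λ(ζ) := (1/(2πκ)) ∬_{Π×Π} ((x₂ + y₂)/|x − ȳ|²) ζ(x) ζ(y) dx dy satisfies |λ(ζ) − κ²/(4π i₀)| ≤ C δ for a constant C depending only on κ and i₀. -/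
open MeasureTheory

set_option maxHeartbeats 800000 in
lemma ker_bound_aux (a δ u v p q : ℝ) (ha : 0 < a) (hδ : 0 < δ) (hδa : δ < a / 2)
    (hu : |u| ≤ δ) (hv : |v| ≤ δ) (hp : |p - a| ≤ δ) (hq : |q - a| ≤ δ) :
    |(p + q) / ((u - v) ^ 2 + (p + q) ^ 2) - 1 / (2 * a)| ≤ 4 * δ / a ^ 2 := by
  rw [abs_le] at hu hv hp hq
  have hs : a ≤ p + q := by linarith
  have hs' : p + q ≤ 2 * a + 2 * δ := by linarith
  have he : (u - v) ^ 2 ≤ 4 * δ ^ 2 := by nlinarith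
  have hd : a ^ 2 ≤ (u - v) ^ 2 + (p + q) ^ 2 := by nlinarith [sq_nonneg (u - v)]
  have hdpos : 0 < (u - v) ^ 2 + (p + q) ^ 2 := lt_of_lt_of_le (by positivity) hd
  have hNup : (p + q) * (2 * a) - ((u - v) ^ 2 + (p + q) ^ 2) ≤ 8 * a * δ := by
    nlinarith [sq_nonneg (p + q - 2 * a), sq_nonneg (u - v)]
  have hNlo : -(8 * a * δ) ≤ (p + q) * (2 * a) - ((u - v) ^ 2 + (p + q) ^ 2) := by
    nlinarith [mul_nonneg (show (0:ℝ) ≤ p + q by linarith)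
        (show (0:ℝ) ≤ 2 * δ - (p + q) + 2 * a by linarith),
      mul_nonneg (show (0:ℝ) ≤ 2 * δ by linarith)
        (show (0:ℝ) ≤ 2 * a + 2 * δ - (p + q) by linarith)]
  have hnum : |(p + q) * (2 * a) - ((u - v) ^ 2 + (p + q) ^ 2)| ≤ 8 * a * δ :=
    abs_le.2 ⟨hNlo, hNup⟩
  have key : (p + q) / ((u - v) ^ 2 + (p + q) ^ 2) - 1 / (2 * a) =
      ((p + q) * (2 * a) - ((u - v) ^ 2 + (p + q) ^ 2)) /
        (((u - v) ^ 2 + (p + q) ^ 2) * (2 * a)) := by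
    field_simp
  rw [key, abs_div, abs_of_pos (mul_pos hdpos (by linarith : (0:ℝ) < 2 * a))]
  rw [div_le_div_iff₀ (by positivity) (by positivity)]
  have h1 : |(p + q) * (2 * a) - ((u - v) ^ 2 + (p + q) ^ 2)| * a ^ 2 ≤ 8 * a * δ * a ^ 2 :=
    mul_le_mul_of_nonneg_right hnum (sq_nonneg a)
  have h2 : 8 * a * δ * a ^ 2 ≤ 4 * δ * (((u - v) ^ 2 + (p + q) ^ 2) * (2 * a)) := by
    nlinarith [mul_nonneg (sub_nonneg.2 hd) (by positivity : (0:ℝ) ≤ 8 * a * δ)]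
  linarith

set_option maxHeartbeats 800000 in
theorem traveling_speed_near_limit (κ i₀ : ℝ) (hκ : 0 < κ) (hi₀ : 0 < i₀) :
    ∃ C : ℝ, 0 < C ∧ ∀ (ζ : ℝ × ℝ → ℝ) (δ : ℝ), 0 < δ → δ < i₀ / (2 * κ) →
      (∀ x, 0 ≤ ζ x) → IntegrableOn ζ UHP →
      (∫ x in UHP, ζ x) = κ →
      (∫ x in UHP, x.1 * ζ x) = 0 →
      (∫ x in UHP, x.2 * ζ x) = i₀ →
      Function.support ζ ⊆ {x : ℝ × ℝ | nrm (x - (0, i₀ / κ)) ≤ δ} →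
      |(1 / (2 * Real.pi * κ)) * (∫ x in UHP, ∫ y in UHP,
          (x.2 + y.2) / nrm (x - (y.1, -y.2)) ^ 2 * ζ x * ζ y)
        - κ ^ 2 / (4 * Real.pi * i₀)| ≤ C * δ := by
  refine ⟨κ ^ 3 / i₀ ^ 2, by positivity, ?_⟩
  intro ζ δ hδ hδ2 hζ0 hζint hκint _h1 _h2 hsupp
  set a : ℝ := i₀ / κ with ha_def
  have ha : 0 < a := div_pos hi₀ hκ
  have hδa : δ < a / 2 := by
    have : a / 2 = i₀ / (2 * κ) := by rw [ha_def, div_div, mul_comm]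
    linarith
  have hζI : Integrable ζ (volume.restrict UHP) := hζint
  have hζm : AEStronglyMeasurable ζ (volume.restrict UHP) := hζI.aestronglyMeasurable
  -- membership facts
  have hmem : ∀ x : ℝ × ℝ, ζ x ≠ 0 → |x.1| ≤ δ ∧ |x.2 - a| ≤ δ := by
    intro x hx
    have hxS := hsupp (Function.mem_support.2 hx)
    simp only [Set.mem_setOf_eq, nrm] at hxS
    have h0 : (0:ℝ) ≤ (x - (0, a)).1 ^ 2 + (x - (0, a)).2 ^ 2 := by positivity
    have hsq : (x - (0, a)).1 ^ 2 + (x - (0, a)).2 ^ 2 ≤ δ ^ 2 := by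
      nlinarith [Real.sq_sqrt h0, Real.sqrt_nonneg ((x - (0, a)).1 ^ 2 + (x - (0, a)).2 ^ 2)]
    have h1 : (x - (0, a)).1 = x.1 := by simp
    have h2 : (x - (0, a)).2 = x.2 - a := by simp
    rw [h1, h2] at hsq
    constructor <;> rw [abs_le] <;> constructor <;> nlinarith [sq_nonneg (x.2 - a), sq_nonneg x.1]
  -- the kernel
  set K : ℝ × ℝ → ℝ × ℝ → ℝ :=
    fun x y => (x.2 + y.2) / ((x.1 - y.1) ^ 2 + (x.2 + y.2) ^ 2) with hK
  have hnrm : ∀ x y : ℝ × ℝ, (x.2 + y.2) / nrm (x - (y.1, -y.2)) ^ 2 = K x y := by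
    intro x y
    have h1 : (x - (y.1, -y.2)).1 = x.1 - y.1 := by simp
    have h2 : (x - (y.1, -y.2)).2 = x.2 + y.2 := by simp [sub_neg_eq_add]
    rw [hK, nrm, h1, h2, Real.sq_sqrt (by positivity)]
  -- kernel bounds on the support
  have hker : ∀ x y : ℝ × ℝ, ζ x ≠ 0 → ζ y ≠ 0 →
      |K x y - 1 / (2 * a)| ≤ 4 * δ / a ^ 2 := by
    intro x y hx hy
    obtain ⟨hx1, hx2⟩ := hmem x hx
    obtain ⟨hy1, hy2⟩ := hmem y hy
    rw [hK]
    exact ker_bound_aux a δ x.1 y.1 x.2 y.2 ha hδ hδa hx1 hy1 hx2 hy2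
  have hKnn : ∀ x y : ℝ × ℝ, ζ x ≠ 0 → ζ y ≠ 0 → 0 ≤ K x y := by
    intro x y hx hy
    obtain ⟨hx1, hx2⟩ := hmem x hx
    obtain ⟨hy1, hy2⟩ := hmem y hy
    rw [abs_le] at hx2 hy2
    rw [hK]
    apply div_nonneg (by linarith) (by positivity)
  -- measurability
  have hKmeas : Measurable (fun p : (ℝ × ℝ) × (ℝ × ℝ) => K p.1 p.2) := by
    rw [hK]
    have m1 : Measurable fun p : (ℝ × ℝ) × (ℝ × ℝ) => p.1.2 + p.2.2 :=
      measurable_fst.snd.add measurable_snd.snd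
    have m2 : Measurable fun p : (ℝ × ℝ) × (ℝ × ℝ) =>
        (p.1.1 - p.2.1) ^ 2 + (p.1.2 + p.2.2) ^ 2 :=
      ((measurable_fst.fst.sub measurable_snd.fst).pow_const 2).add (m1.pow_const 2)
    exact m1.div m2
  have hKm : ∀ x : ℝ × ℝ, Measurable (fun y => K x y) :=
    fun x => hKmeas.comp measurable_prodMk_left
  -- inner integrability
  have hintK : ∀ x : ℝ × ℝ, ζ x ≠ 0 →
      Integrable (fun y => K x y * ζ y) (volume.restrict UHP) := by
    intro x hx
    refine Integrable.mono' (hζI.const_mul (1 / (2 * a) + 4 * δ / a ^ 2))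
      ((hKm x).aestronglyMeasurable.mul hζm) (Filter.Eventually.of_forall fun y => ?_)
    by_cases hy : ζ y = 0
    · simp [hy]
    · have hb : |K x y| ≤ 1 / (2 * a) + 4 * δ / a ^ 2 := by
        calc |K x y| = |(K x y - 1 / (2 * a)) + 1 / (2 * a)| := by ring_nf
          _ ≤ |K x y - 1 / (2 * a)| + |1 / (2 * a)| := abs_add_le _ _
          _ ≤ 4 * δ / a ^ 2 + 1 / (2 * a) := by
              have := hker x y hx hy
              have : |(1:ℝ) / (2 * a)| = 1 / (2 * a) := abs_of_pos (by positivity)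
              linarith [hker x y hx hy, this.le]
          _ = 1 / (2 * a) + 4 * δ / a ^ 2 := by ring
      rw [Real.norm_eq_abs, abs_mul, abs_of_nonneg (hζ0 y)]
      exact mul_le_mul_of_nonneg_right hb (hζ0 y)
  -- inner integral estimate
  have hinner : ∀ x : ℝ × ℝ, ζ x ≠ 0 →
      |(∫ y in UHP, K x y * ζ y) - 1 / (2 * a) * κ| ≤ 4 * δ / a ^ 2 * κ := by
    intro x hx
    have e1 : 1 / (2 * a) * κ = ∫ y in UHP, 1 / (2 * a) * ζ y := by
      rw [integral_const_mul, hκint]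
    rw [e1, ← integral_sub (hintK x hx) (hζI.const_mul (1 / (2 * a))), ← Real.norm_eq_abs]
    have hb : ∀ y, ‖K x y * ζ y - 1 / (2 * a) * ζ y‖ ≤ 4 * δ / a ^ 2 * ζ y := by
      intro y
      by_cases hy : ζ y = 0
      · simp [hy]
      · rw [show K x y * ζ y - 1 / (2 * a) * ζ y = (K x y - 1 / (2 * a)) * ζ y by ring,
          Real.norm_eq_abs, abs_mul, abs_of_nonneg (hζ0 y)]
        exact mul_le_mul_of_nonneg_right (hker x y hx hy) (hζ0 y)
    calc ‖∫ y in UHP, (K x y * ζ y - 1 / (2 * a) * ζ y)‖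
        ≤ ∫ y in UHP, 4 * δ / a ^ 2 * ζ y :=
          norm_integral_le_of_norm_le (hζI.const_mul _) (Filter.Eventually.of_forall hb)
      _ = 4 * δ / a ^ 2 * κ := by rw [integral_const_mul, hκint]
  -- the function F (inner integral)
  set F : ℝ × ℝ → ℝ := fun x => ∫ y in UHP, K x y * ζ x * ζ y with hF
  have hFG : ∀ x, |F x - 1 / (2 * a) * κ * ζ x| ≤ 4 * δ / a ^ 2 * κ * ζ x := by
    intro x
    by_cases hx : ζ x = 0
    · have hF0 : F x = 0 := by
        rw [hF]; simp [hx]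
      rw [hF0, hx]; simp
    · have e : F x = ζ x * ∫ y in UHP, K x y * ζ y := by
        rw [hF]
        simp only
        rw [← integral_const_mul]
        congr 1
        funext y
        ring
      rw [e, show ζ x * (∫ y in UHP, K x y * ζ y) - 1 / (2 * a) * κ * ζ x
          = ζ x * ((∫ y in UHP, K x y * ζ y) - 1 / (2 * a) * κ) by ring,
        abs_mul, abs_of_nonneg (hζ0 x)]
      calc ζ x * |(∫ y in UHP, K x y * ζ y) - 1 / (2 * a) * κ|
          ≤ ζ x * (4 * δ / a ^ 2 * κ) :=
            mul_le_mul_of_nonneg_left (hinner x hx) (hζ0 x)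
        _ = 4 * δ / a ^ 2 * κ * ζ x := by ring
  have hF0 : ∀ x, 0 ≤ F x := by
    intro x
    rw [hF]
    apply integral_nonneg
    intro y
    by_cases hx : ζ x = 0
    · simp [hx]
    · by_cases hy : ζ y = 0
      · simp [hy]
      · exact mul_nonneg (mul_nonneg (hKnn x y hx hy) (hζ0 x)) (hζ0 y)
  have hFm : AEStronglyMeasurable F (volume.restrict UHP) := by
    have h1 : AEStronglyMeasurable
        (fun p : (ℝ × ℝ) × (ℝ × ℝ) => K p.1 p.2 * ζ p.1 * ζ p.2)
        ((volume.restrict UHP).prod (volume.restrict UHP)) :=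
      (hKmeas.aestronglyMeasurable.mul hζm.comp_fst).mul hζm.comp_snd
    exact h1.integral_prod_right'
  have hFint : Integrable F (volume.restrict UHP) := by
    refine Integrable.mono' (hζI.const_mul (1 / (2 * a) * κ + 4 * δ / a ^ 2 * κ)) hFm
      (Filter.Eventually.of_forall fun x => ?_)
    rw [Real.norm_eq_abs, abs_of_nonneg (hF0 x),
      show (1 / (2 * a) * κ + 4 * δ / a ^ 2 * κ) * ζ x
        = 1 / (2 * a) * κ * ζ x + 4 * δ / a ^ 2 * κ * ζ x by ring]
    linarith [(abs_le.1 (hFG x)).2]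
  have Gint : Integrable (fun x => 1 / (2 * a) * κ * ζ x) (volume.restrict UHP) :=
    hζI.const_mul _
  have hmain : |(∫ x in UHP, F x) - 1 / (2 * a) * κ ^ 2| ≤ 4 * δ / a ^ 2 * κ ^ 2 := by
    have e2 : 1 / (2 * a) * κ ^ 2 = ∫ x in UHP, 1 / (2 * a) * κ * ζ x := by
      rw [integral_const_mul, hκint]; ring
    rw [e2, ← integral_sub hFint Gint, ← Real.norm_eq_abs]
    calc ‖∫ x in UHP, (F x - 1 / (2 * a) * κ * ζ x)‖
        ≤ ∫ x in UHP, 4 * δ / a ^ 2 * κ * ζ x :=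
          norm_integral_le_of_norm_le (hζI.const_mul _)
            (Filter.Eventually.of_forall fun x => by rw [Real.norm_eq_abs]; exact hFG x)
      _ = 4 * δ / a ^ 2 * κ ^ 2 := by rw [integral_const_mul, hκint]; ring
  -- conclude
  have hπ : 0 < Real.pi := Real.pi_pos
  simp_rw [hnrm]
  have e3 : κ ^ 2 / (4 * Real.pi * i₀) = 1 / (2 * Real.pi * κ) * (1 / (2 * a) * κ ^ 2) := by
    rw [ha_def]
    field_simp
    ring
  rw [e3, ← mul_sub, abs_mul, abs_of_pos (show (0:ℝ) < 1 / (2 * Real.pi * κ) by positivity)]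
  calc 1 / (2 * Real.pi * κ) * |(∫ x in UHP, F x) - 1 / (2 * a) * κ ^ 2|
      ≤ 1 / (2 * Real.pi * κ) * (4 * δ / a ^ 2 * κ ^ 2) := by
        exact mul_le_mul_of_nonneg_left hmain (by positivity)
    _ ≤ κ ^ 3 / i₀ ^ 2 * δ := by
        have heq : 1 / (2 * Real.pi * κ) * (4 * δ / a ^ 2 * κ ^ 2)
            = 2 * κ ^ 3 / (Real.pi * i₀ ^ 2) * δ := by
          rw [ha_def]
          field_simp
          ring
        rw [heq]
        have hle : 2 * κ ^ 3 / (Real.pi * i₀ ^ 2) ≤ κ ^ 3 / i₀ ^ 2 := by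
          rw [div_le_div_iff₀ (by positivity) (by positivity)]
          nlinarith [mul_nonneg (mul_nonneg (pow_pos hκ 3).le (sq_nonneg i₀))
            (show (0:ℝ) ≤ Real.pi - 2 by linarith [Real.pi_gt_three])]
        exact mul_le_mul_of_nonneg_right hle hδ.le
end
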